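/- Let μ, m ≥ 0, N ≥ 1, and let sequences x_k, u_k, y_{k+1} ∈ Q, A_k, α_{k+1}, L_{k+1}, δ_k, δ̃_k (k = 0, …, N−1) be generated by the fast adaptive gradient method: A₀ = 0, u₀ = x₀, α_{k+1} > 0, A_{k+1} = A_k + α_{k+1}, A_{k+1}·(1 + A_k·μ + A_k·m) = L_{k+1}·α_{k+1}², y_{k+1} = (α_{k+1}·u_k + A_k·x_k)/A_{k+1}, x_{k+1} = (α_{k+1}·u_{k+1} + A_k·x_k)/A_{k+1}, where at each step conditions (a)–(e) of the per-iteration lemma hold (a (δ_k, L_{k+1}, μ, m, V, ‖·‖)-model of f at y_{k+1} with inexact line search, u_{k+1} a δ̃_k-approximate minimizer of the auxiliary problem, and d 1-strongly convex with respect to ‖·‖). Let x⋆ ∈ Q be a minimizer of f on Q. Then: (i) f(x_N) − f(x⋆) ≤ V[u₀](x⋆)/A_N + (2·∑_{k=0}^{N−1} A_{k+1}·δ_k)/A_N + (∑_{k=0}^{N−1} δ̃_k)/A_N; and (ii) V[u_N](x⋆) ≤ (V[u₀](x⋆) + 2·∑_{k=0}^{N−1} A_{k+1}·δ_k + ∑_{k=0}^{N−1}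 δ̃_k)/(1 + A_N·μ + A_N·m). -/

import Mathlib

open RealInnerProductSpace Finset

/-- The Bregman divergence `V[y](x) = d(x) - d(y) - ⟪∇d(y), x - y⟫` generated by `d`
with gradient map `Dd`. -/
noncomputable def breg {E : Type*} [NormedAddCommGroup E] [InnerProductSpace ℝ E]
    (d : E → ℝ) (Dd : E → E) (y x : E) : ℝ :=
  d x - d y - ⟪Dd y, x - y⟫

/-- `g` is a subgradient of `ψ` at `z` (relative to the set `Q`). -/
def IsSubgradOn {E : Type*} [NormedAddCommGroup E] [InnerProductSpace ℝ E]
    (Q : Set E) (ψ : E → ℝ) (z g : E) : Prop :=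
  ∀ x ∈ Q, ψ z + ⟪g, x - z⟫ ≤ ψ x

/-- `ψ` is `m`-strongly convex relative to `d` on `Q`, where `V` is the Bregman
divergence generated by `d`. -/
def StrongRelConvexOn {E : Type*} [NormedAddCommGroup E] [InnerProductSpace ℝ E]
    (Q : Set E) (V : E → E → ℝ) (m : ℝ) (ψ : E → ℝ) : Prop :=
  ∀ z ∈ Q, ∀ g : E, IsSubgradOn Q ψ z g → ∀ x ∈ Q, ψ z + ⟪g, x - z⟫ + m * V z x ≤ ψ x

/-- `y` is a `δ`-approximate minimizer of `Ψ` on `Q`: there exists a subgradient `h`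
of `Ψ` at `y` such that `⟪h, x - y⟫ ≥ -δ` for all `x ∈ Q`. -/
def IsApproxMinOn {E : Type*} [NormedAddCommGroup E] [InnerProductSpace ℝ E]
    (Q : Set E) (Ψ : E → ℝ) (δ : ℝ) (y : E) : Prop :=
  y ∈ Q ∧ ∃ h : E, IsSubgradOn Q Ψ y h ∧ ∀ x ∈ Q, -δ ≤ ⟪h, x - y⟫

lemma breg_three_point {E : Type*} [NormedAddCommGroup E] [InnerProductSpace ℝ E]
    (d : E → ℝ) (Dd : E → E) (p z w : E) :
    breg d Dd p w = breg d Dd p z + ⟪Dd z - Dd p, w - z⟫ + breg d Dd z w := by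
  simp only [breg, inner_sub_left, inner_sub_right]; ring

lemma convexOn_inner_const {E : Type*} [NormedAddCommGroup E] [InnerProductSpace ℝ E]
    (Q : Set E) (hQ : Convex ℝ Q) (v : E) (r : ℝ) :
    ConvexOn ℝ Q (fun w => ⟪v, w⟫ + r) := by
  refine ⟨hQ, fun p hp q hq a b ha hb hab => ?_⟩
  simp only [inner_add_right, real_inner_smul_right, smul_eq_mul]
  have : a * r + b * r = r := by rw [← add_mul, hab, one_mul]
  linarith

lemma strong_subgrad {E : Type*} [NormedAddCommGroup E] [InnerProductSpace ℝ E]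
    [CompleteSpace E]
    (Q : Set E) (hQ : Convex ℝ Q) (d : E → ℝ) (Dd : E → E) (Ψ : E → ℝ) (c : ℝ)
    (hconv : ConvexOn ℝ Q (fun w => Ψ w - c * d w))
    (z : E) (hz : z ∈ Q) (hgrad : HasGradientAt d (Dd z) z)
    (h : E) (hsub : IsSubgradOn Q Ψ z h) :
    ∀ w ∈ Q, Ψ z + ⟪h, w - z⟫ + c * breg d Dd z w ≤ Ψ w := by
  intro w hw
  have hline : HasDerivAt (fun t : ℝ => z + t • (w - z)) (w - z) 0 := by
    simpa using ((hasDerivAt_id (0:ℝ)).smul_const (w - z)).const_add z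
  have hd : HasDerivAt (fun t : ℝ => d (z + t • (w - z))) ⟪Dd z, w - z⟫ 0 := by
    have h0 : (0:ℝ) • (w - z) = 0 := by simp
    have hg' : HasFDerivAt d ((InnerProductSpace.toDual ℝ E) (Dd z)) (z + (0:ℝ) • (w - z)) := by
      simpa using hgrad.hasFDerivAt
    have := hg'.comp_hasDerivAt 0 hline
    simp only [InnerProductSpace.toDual_apply_apply] at this
    exact this
  have hslope : Filter.Tendsto (fun t : ℝ => (d (z + t • (w - z)) - d z) / t)
      (nhdsWithin 0 (Set.Ioi 0)) (nhds ⟪Dd z, w - z⟫) := by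
    have h1 := hasDerivAt_iff_tendsto_slope.mp hd
    have h2 : nhdsWithin (0:ℝ) (Set.Ioi 0) ≤ nhdsWithin 0 {(0:ℝ)}ᶜ :=
      nhdsWithin_mono 0 (fun t ht => ne_of_gt ht)
    have h3 := h1.mono_left h2
    refine h3.congr (fun t => ?_)
    simp [slope_def_field]
  have key : ∀ t ∈ Set.Ioc (0:ℝ) 1,
      ⟪h, w - z⟫ + c * ((d w - d z) - (d (z + t • (w - z)) - d z) / t) ≤ Ψ w - Ψ z := by
    intro t ht
    obtain ⟨ht0, ht1⟩ := ht
    have hpt : z + t • (w - z) = (1 - t) • z + t • w := by module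
    have hwt : z + t • (w - z) ∈ Q := by
      rw [hpt]; exact hQ hz hw (by linarith) ht0.le (by ring)
    have h1 := hsub _ hwt
    have h1' : Ψ z + t * ⟪h, w - z⟫ ≤ Ψ (z + t • (w - z)) := by
      simpa [real_inner_smul_right] using h1
    have h2 := hconv.2 hz hw (sub_nonneg.mpr ht1) ht0.le (by ring : 1 - t + t = 1)
    simp only [smul_eq_mul, ← hpt] at h2
    have ht0' : t ≠ 0 := ne_of_gt ht0
    rw [← sub_nonneg]
    have expand : Ψ w - Ψ z - (⟪h, w - z⟫ + c * ((d w - d z) - (d (z + t • (w - z)) - d z) / t))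
        = (t * (Ψ w - Ψ z) - (t * ⟪h, w - z⟫ + c * (t * (d w - d z) - (d (z + t • (w - z)) - d z)))) / t := by
      field_simp
    rw [expand]
    apply div_nonneg _ ht0.le
    nlinarith [h1', h2]
  have hev : ∀ᶠ t in nhdsWithin (0:ℝ) (Set.Ioi 0),
      ⟪h, w - z⟫ + c * ((d w - d z) - (d (z + t • (w - z)) - d z) / t) ≤ Ψ w - Ψ z :=
    Filter.eventually_of_mem (Ioc_mem_nhdsGT_of_mem (by simp : (0:ℝ) ∈ Set.Ico 0 1)) key
  have htend : Filter.Tendsto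
      (fun t : ℝ => ⟪h, w - z⟫ + c * ((d w - d z) - (d (z + t • (w - z)) - d z) / t))
      (nhdsWithin 0 (Set.Ioi 0)) (nhds (⟪h, w - z⟫ + c * ((d w - d z) - ⟪Dd z, w - z⟫))) :=
    ((hslope.const_sub (d w - d z)).const_mul c).const_add ⟪h, w - z⟫
  have hfin := le_of_tendsto htend hev
  have hb : c * breg d Dd z w = c * (d w - d z - ⟪Dd z, w - z⟫) := rfl
  linarith [hfin]

set_option maxHeartbeats 2000000 in
/-- Theorem 3.4: convergence rates of the fast adaptive gradient method with
an inexact `(δ, L, μ, m, V, ‖·‖)`-model, both for the objective and the argument. -/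
theorem stmt7
    {E : Type*} [NormedAddCommGroup E] [InnerProductSpace ℝ E] [FiniteDimensional ℝ E]
    (Q : Set E) (hQ : Convex ℝ Q)
    (d : E → ℝ) (Dd : E → E)
    (hd_conv : ConvexOn ℝ Set.univ d) (hd_diff : ∀ x, HasGradientAt d (Dd x) x)
    (f : E → ℝ) (μ m : ℝ) (hμ : 0 ≤ μ) (hm : 0 ≤ m)
    (N : ℕ) (hN : 1 ≤ N)
    (x u y : ℕ → E) (A α L δs δts : ℕ → ℝ)
    (hxQ : ∀ k ≤ N, x k ∈ Q) (huQ : ∀ k ≤ N, u k ∈ Q)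
    (hA0 : A 0 = 0) (hu0 : u 0 = x 0)
    (hδs : ∀ k < N, 0 ≤ δs k) (hδts : ∀ k < N, 0 ≤ δts k)
    (hα : ∀ k < N, 0 < α (k + 1))
    (hArec : ∀ k < N, A (k + 1) = A k + α (k + 1))
    (hL : ∀ k < N, 0 < L (k + 1))
    (hquad : ∀ k < N, A (k + 1) * (1 + A k * μ + A k * m) = L (k + 1) * α (k + 1) ^ 2)
    (hy : ∀ k < N, y (k + 1) = (A (k + 1))⁻¹ • (α (k + 1) • u k + A k • x k))
    (hx : ∀ k < N, x (k + 1) = (A (k + 1))⁻¹ • (α (k + 1) • u (k + 1) + A k • x k))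
    (hsc : ∀ a ∈ Q, ∀ b ∈ Q, 1 / 2 * ‖a - b‖ ^ 2 ≤ breg d Dd b a)
    (hmodel : ∀ k < N, ∃ (ψ : E → ℝ) (c cp : ℝ),
      ConvexOn ℝ Q ψ ∧ ψ (y (k + 1)) = 0 ∧ StrongRelConvexOn Q (breg d Dd) m ψ ∧
      (∀ w ∈ Q, μ * breg d Dd (y (k + 1)) w ≤ f w - c - ψ w) ∧
      IsApproxMinOn Q
        (fun w => α (k + 1) * ψ w + (1 + A k * μ + A k * m) * breg d Dd (u k) w
          + α (k + 1) * μ * breg d Dd (y (k + 1)) w) (δts k) (u (k + 1)) ∧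
      f (x (k + 1)) ≤ cp + δs k ∧
      cp ≤ c + ψ (x (k + 1)) + L (k + 1) / 2 * ‖x (k + 1) - y (k + 1)‖ ^ 2 + δs k)
    (xs : E) (hxs : xs ∈ Q) (hmin : ∀ w ∈ Q, f xs ≤ f w) :
    (f (x N) - f xs ≤
        breg d Dd (u 0) xs / A N
          + (2 * ∑ k ∈ Finset.range N, A (k + 1) * δs k) / A N
          + (∑ k ∈ Finset.range N, δts k) / A N) ∧
    breg d Dd (u N) xs ≤
      (breg d Dd (u 0) xs + 2 * ∑ k ∈ Finset.range N, A (k + 1) * δs k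
          + ∑ k ∈ Finset.range N, δts k) / (1 + A N * μ + A N * m) := by
  have hbnn : ∀ a ∈ Q, ∀ b ∈ Q, 0 ≤ breg d Dd b a := fun a ha b hb =>
    le_trans (by positivity) (hsc a ha b hb)
  have hA_nn : ∀ k, k ≤ N → 0 ≤ A k := by
    intro k
    induction k with
    | zero => intro _; simp [hA0]
    | succ n ih =>
      intro hk
      have hn : n < N := Nat.lt_of_succ_le hk
      have h1 := hα n hn
      have h2 := ih hn.le
      rw [hArec n hn]; linarith
  have hA_pos : ∀ k < N, 0 < A (k + 1) := by
    intro k hk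
    have := hα k hk; have := hA_nn k hk.le
    rw [hArec k hk]; linarith
  have hyQ : ∀ k < N, y (k + 1) ∈ Q := by
    intro k hk
    have hA1 := hA_pos k hk; have hAk := hA_nn k hk.le; have hαp := hα k hk
    have hmem := hQ (huQ k hk.le) (hxQ k hk.le)
      (div_nonneg hαp.le hA1.le) (div_nonneg hAk hA1.le)
      (by field_simp; linarith [hArec k hk])
    rw [hy k hk]
    convert hmem using 1
    simp [smul_add, smul_smul, div_eq_inv_mul]
  -- per-step inequality
  have step : ∀ k < N, ∀ w ∈ Q,
      A (k+1) * f (x (k+1)) + (1 + A (k+1)*μ + A (k+1)*m) * breg d Dd (u (k+1)) w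
      ≤ α (k+1) * f w + A k * f (x k) + (1 + A k*μ + A k*m) * breg d Dd (u k) w
        + 2 * A (k+1) * δs k + δts k := by
    intro k hk w hw
    obtain ⟨ψ, c, cp, hψconv, hψy, hψstrong, hmod, happrox, hfd1, hfd2⟩ := hmodel k hk
    obtain ⟨huQ1, h, hsubΨ, happineq⟩ := happrox
    have hαp := hα k hk
    have hA1p := hA_pos k hk
    have hAk := hA_nn k hk.le
    have hukQ := huQ k hk.le
    have hxkQ := hxQ k hk.le
    have hyQ1 := hyQ k hk
    have harec := hArec k hk
    have hβ1 : (1:ℝ) ≤ 1 + A k * μ + A k * m := by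
      have h1 := mul_nonneg hAk hμ; have h2 := mul_nonneg hAk hm; linarith
    -- convexity of Ψ - c₀ d
    set v0 : E := -((1 + A k * μ + A k * m) • Dd (u k) + (α (k+1) * μ) • Dd (y (k+1))) with hv0
    set r : ℝ := (1 + A k * μ + A k * m) * (⟪Dd (u k), u k⟫ - d (u k))
        + α (k+1) * μ * (⟪Dd (y (k+1)), y (k+1)⟫ - d (y (k+1))) with hr
    have hfuneq : (fun v => (α (k + 1) * ψ v + (1 + A k * μ + A k * m) * breg d Dd (u k) v
          + α (k + 1) * μ * breg d Dd (y (k + 1)) v)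
          - (1 + A k * μ + A k * m + α (k+1) * μ) * d v)
        = fun v => α (k+1) * ψ v + (⟪v0, v⟫ + r) := by
      funext v
      simp only [hv0, hr, breg, inner_sub_right, inner_add_left, inner_neg_left,
        real_inner_smul_left]
      ring
    have hconv0 : ConvexOn ℝ Q (fun v => (α (k + 1) * ψ v
          + (1 + A k * μ + A k * m) * breg d Dd (u k) v
          + α (k + 1) * μ * breg d Dd (y (k + 1)) v)
          - (1 + A k * μ + A k * m + α (k+1) * μ) * d v) := by
      rw [hfuneq]
      exact (hψconv.smul hαp.le).add (convexOn_inner_const Q hQ v0 r)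
    have key1 := strong_subgrad Q hQ d Dd _ (1 + A k * μ + A k * m + α (k+1) * μ)
      hconv0 (u (k+1)) huQ1 (hd_diff (u (k+1))) h hsubΨ
    -- subgradient of ψ at u (k+1)
    set g' : E := h - (1 + A k * μ + A k * m) • (Dd (u (k+1)) - Dd (u k))
        - (α (k+1) * μ) • (Dd (u (k+1)) - Dd (y (k+1))) with hg'def
    have hinner : ∀ v : E, ⟪g', v⟫ = ⟪h, v⟫
        - (1 + A k * μ + A k * m) * ⟪Dd (u (k+1)) - Dd (u k), v⟫
        - α (k+1) * μ * ⟪Dd (u (k+1)) - Dd (y (k+1)), v⟫ := by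
      intro v
      simp only [hg'def, inner_sub_left, real_inner_smul_left]
    have hg'sub : ∀ v ∈ Q, α (k+1) * ψ (u (k+1)) + ⟪g', v - u (k+1)⟫ ≤ α (k+1) * ψ v := by
      intro v hv
      have h3a := breg_three_point d Dd (u k) (u (k+1)) v
      have h3b := breg_three_point d Dd (y (k+1)) (u (k+1)) v
      have hk1 := key1 v hv
      have hi := hinner (v - u (k+1))
      have h3a' := congrArg (fun t => (1 + A k * μ + A k * m) * t) h3a
      have h3b' := congrArg (fun t => (α (k+1) * μ) * t) h3b
      simp only [mul_add] at h3a' h3b'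
      linarith
    have hg : IsSubgradOn Q ψ (u (k+1)) ((α (k+1))⁻¹ • g') := by
      intro v hv
      have h1 := hg'sub v hv
      have hi : ⟪(α (k+1))⁻¹ • g', v - u (k+1)⟫ = (α (k+1))⁻¹ * ⟪g', v - u (k+1)⟫ :=
        real_inner_smul_left _ _ _
      rw [hi]
      have h2 : α (k+1) * (ψ (u (k+1)) + (α (k+1))⁻¹ * ⟪g', v - u (k+1)⟫) ≤ α (k+1) * ψ v := by
        rw [mul_add, ← mul_assoc, mul_inv_cancel₀ (ne_of_gt hαp), one_mul]
        linarith
      exact le_of_mul_le_mul_left h2 hαp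
    have hstr := hψstrong (u (k+1)) huQ1 _ hg
    -- strengthened inequality with modulus β + αμ + αm
    have key4 : ∀ v ∈ Q,
        (α (k + 1) * ψ (u (k+1)) + (1 + A k * μ + A k * m) * breg d Dd (u k) (u (k+1))
          + α (k + 1) * μ * breg d Dd (y (k + 1)) (u (k+1)))
        + ⟪h, v - u (k+1)⟫
        + (1 + A (k+1) * μ + A (k+1) * m) * breg d Dd (u (k+1)) v
        ≤ α (k + 1) * ψ v + (1 + A k * μ + A k * m) * breg d Dd (u k) v
          + α (k + 1) * μ * breg d Dd (y (k + 1)) v := by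
      intro v hv
      have hs := hstr v hv
      have hs' := mul_le_mul_of_nonneg_left hs hαp.le
      have hi : ⟪(α (k+1))⁻¹ • g', v - u (k+1)⟫ = (α (k+1))⁻¹ * ⟪g', v - u (k+1)⟫ :=
        real_inner_smul_left _ _ _
      have hii : α (k+1) * ((α (k+1))⁻¹ * ⟪g', v - u (k+1)⟫) = ⟪g', v - u (k+1)⟫ := by
        rw [← mul_assoc, mul_inv_cancel₀ (ne_of_gt hαp), one_mul]
      rw [hi, mul_add, mul_add, hii] at hs'
      have hi2 := hinner (v - u (k+1))
      have h3a := breg_three_point d Dd (u k) (u (k+1)) v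
      have h3b := breg_three_point d Dd (y (k+1)) (u (k+1)) v
      have hγeq : 1 + A (k+1) * μ + A (k+1) * m
          = (1 + A k * μ + A k * m) + α (k+1) * μ + α (k+1) * m := by
        rw [harec]; ring
      have h3a' := congrArg (fun t => (1 + A k * μ + A k * m) * t) h3a
      have h3b' := congrArg (fun t => (α (k+1) * μ) * t) h3b
      simp only [mul_add] at h3a' h3b'
      rw [hγeq]
      nlinarith [hs', h3a', h3b']
    -- approximate minimality
    have key6 : (α (k + 1) * ψ (u (k+1)) + (1 + A k * μ + A k * m) * breg d Dd (u k) (u (k+1))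
          + α (k + 1) * μ * breg d Dd (y (k + 1)) (u (k+1)))
        ≤ (α (k + 1) * ψ w + (1 + A k * μ + A k * m) * breg d Dd (u k) w
          + α (k + 1) * μ * breg d Dd (y (k + 1)) w) + δts k
          - (1 + A (k+1) * μ + A (k+1) * m) * breg d Dd (u (k+1)) w := by
      have := key4 w hw
      have := happineq w hw
      linarith
    -- step (d) consequences
    have hx1 : f (x (k+1)) ≤ c + ψ (x (k+1))
        + L (k+1) / 2 * ‖x (k+1) - y (k+1)‖ ^ 2 + 2 * δs k := by linarith
    have hdiff2 : A (k+1) • (x (k+1) - y (k+1)) = α (k+1) • (u (k+1) - u k) := by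
      rw [hx k hk, hy k hk, smul_sub, smul_inv_smul₀ (ne_of_gt hA1p),
        smul_inv_smul₀ (ne_of_gt hA1p)]
      module
    have h2n : A (k+1)^2 * ‖x (k+1) - y (k+1)‖^2 = α (k+1)^2 * ‖u (k+1) - u k‖^2 := by
      have := congrArg (fun v => ‖v‖^2) hdiff2
      simpa [norm_smul, mul_pow, sq_abs] using this
    have hLterm : A (k+1) * (L (k+1) / 2 * ‖x (k+1) - y (k+1)‖ ^ 2)
        ≤ (1 + A k * μ + A k * m) * breg d Dd (u k) (u (k+1)) := by
      have h1 := hsc (u (k+1)) huQ1 (u k) hukQ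
      have hq := hquad k hk
      have hLp := hL k hk
      have h2n' := congrArg (fun t => L (k+1) / 2 * t) h2n
      have hq' := congrArg (fun t => t * (1/2 * ‖u (k+1) - u k‖^2)) hq
      have hp : 0 ≤ (A (k+1) * (1 + A k * μ + A k * m))
          * (breg d Dd (u k) (u (k+1)) - 1/2 * ‖u (k+1) - u k‖^2) :=
        mul_nonneg (mul_nonneg hA1p.le (by linarith)) (by linarith)
      have key : A (k+1) * (A (k+1) * (L (k+1) / 2 * ‖x (k+1) - y (k+1)‖ ^ 2))
          ≤ A (k+1) * ((1 + A k * μ + A k * m) * breg d Dd (u k) (u (k+1))) := by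
        nlinarith [h2n', hq', hp]
      exact le_of_mul_le_mul_left key hA1p
    have hxcomb : x (k+1) = (α (k+1) / A (k+1)) • u (k+1) + (A k / A (k+1)) • x k := by
      rw [hx k hk]
      simp [smul_add, smul_smul, div_eq_inv_mul]
    have hψx : A (k+1) * ψ (x (k+1)) ≤ α (k+1) * ψ (u (k+1)) + A k * ψ (x k) := by
      have hcv := hψconv.2 huQ1 hxkQ (div_nonneg hαp.le hA1p.le)
        (div_nonneg hAk hA1p.le) (by field_simp; linarith)
      rw [← hxcomb] at hcv
      simp only [smul_eq_mul] at hcv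
      have := mul_le_mul_of_nonneg_left hcv hA1p.le
      have e : A (k+1) * (α (k+1) / A (k+1) * ψ (u (k+1)) + A k / A (k+1) * ψ (x k))
          = α (k+1) * ψ (u (k+1)) + A k * ψ (x k) := by
        field_simp
      linarith [e ▸ this]
    have hψxk : ψ (x k) ≤ f (x k) - c := by
      have h1 := hmod (x k) hxkQ
      have h2 := mul_nonneg hμ (hbnn (x k) hxkQ (y (k+1)) hyQ1)
      linarith
    have hbig : A (k+1) * f (x (k+1)) ≤ A (k+1) * c + α (k+1) * ψ (u (k+1))
        + A k * (f (x k) - c) + (1 + A k * μ + A k * m) * breg d Dd (u k) (u (k+1))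
        + 2 * A (k+1) * δs k := by
      have H := mul_le_mul_of_nonneg_left hx1 hA1p.le
      rw [mul_add, mul_add, mul_add] at H
      have hψxk' := mul_le_mul_of_nonneg_left hψxk hAk
      have e : 2 * A (k+1) * δs k = A (k+1) * (2 * δs k) := by ring
      rw [e]
      linarith
    -- model at w, times α
    have hmodw := hmod w hw
    have hmodw' : α (k+1) * ψ w + α (k+1) * μ * breg d Dd (y (k+1)) w
        ≤ α (k+1) * f w - α (k+1) * c := by
      have := mul_le_mul_of_nonneg_left hmodw hαp.le
      nlinarith [this]
    have hVyu : 0 ≤ α (k+1) * μ * breg d Dd (y (k+1)) (u (k+1)) :=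
      mul_nonneg (mul_nonneg hαp.le hμ) (hbnn (u (k+1)) huQ1 (y (k+1)) hyQ1)
    have eAc : A (k+1) * c = A k * c + α (k+1) * c := by rw [harec]; ring
    linarith
  -- telescoping
  have tele : ∀ k ≤ N, A k * (f (x k) - f xs) + (1 + A k*μ + A k*m) * breg d Dd (u k) xs
      ≤ breg d Dd (u 0) xs + ∑ j ∈ Finset.range k, (2 * A (j+1) * δs j + δts j) := by
    intro k
    induction k with
    | zero => intro _; simp [hA0]
    | succ n ih =>
      intro hk
      have hn : n < N := Nat.lt_of_succ_le hk
      have ihn := ih hn.le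
      have hs := step n hn xs hxs
      have harec := hArec n hn
      rw [Finset.sum_range_succ]
      have e1 : A (n+1) * (f (x (n+1)) - f xs)
          = A (n+1) * f (x (n+1)) - A n * f xs - α (n+1) * f xs := by rw [harec]; ring
      have e2 : A n * (f (x n) - f xs) = A n * f (x n) - A n * f xs := by ring
      linarith
  have hAN : 0 < A N := by
    obtain ⟨M, rfl⟩ : ∃ M, N = M + 1 := ⟨N - 1, (Nat.succ_pred_eq_of_pos hN).symm⟩
    exact hA_pos M (Nat.lt_succ_self M)
  have hteleN := tele N le_rfl
  have hsum : ∑ j ∈ Finset.range N, (2 * A (j+1) * δs j + δts j)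
      = 2 * ∑ k ∈ Finset.range N, A (k + 1) * δs k + ∑ k ∈ Finset.range N, δts k := by
    rw [Finset.sum_add_distrib, Finset.mul_sum]
    simp [mul_assoc]
  rw [hsum] at hteleN
  have hVN := hbnn xs hxs (u N) (huQ N le_rfl)
  have hγN : 0 < 1 + A N * μ + A N * m := by
    have h1 := mul_nonneg (hA_nn N le_rfl) hμ
    have h2 := mul_nonneg (hA_nn N le_rfl) hm
    linarith
  have hfN : f xs ≤ f (x N) := hmin _ (hxQ N le_rfl)
  have hγV : 0 ≤ (1 + A N * μ + A N * m) * breg d Dd (u N) xs := mul_nonneg hγN.le hVN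
  constructor
  · rw [← add_div, ← add_div, le_div_iff₀ hAN]
    have ecomm : (f (x N) - f xs) * A N = A N * (f (x N) - f xs) := mul_comm _ _
    linarith
  · rw [le_div_iff₀ hγN]
    have h0 : 0 ≤ A N * (f (x N) - f xs) := mul_nonneg hAN.le (by linarith)
    have ecomm : breg d Dd (u N) xs * (1 + A N * μ + A N * m)
        = (1 + A N * μ + A N * m) * breg d Dd (u N) xs := mul_comm _ _
    linarith
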